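/- If D is a division ring and G is a nilpotent normal subgroup of D*, then G is contained in the center of D. -/

import Mathlib

section Helpers

variable {D : Type*} [DivisionRing D]

private lemma cen_inv {z : D} (hz : z ∈ Subring.center D) : z⁻¹ ∈ Subring.center D := by
  rcases eq_or_ne z 0 with h | h
  · rw [h, inv_zero]; exact Subring.zero_mem _
  · rw [Subring.mem_center_iff] at hz ⊢
    intro g
    have hc : Commute g z := hz g
    exact hc.inv_right₀

private lemma pass_inv {a P Q : D} (hP : P ≠ 0) (hQ : Q ≠ 0) (h : a * P = Q * a) :
    a * P⁻¹ = Q⁻¹ * a := by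
  rw [mul_inv_eq_iff_eq_mul₀ hP, mul_assoc, eq_inv_mul_iff_mul_eq₀ hQ]
  exact h.symm

private lemma csw {s : D} (hs : s ∈ Subring.center D) (t y : D) :
    t * (s * y) = s * (t * y) := by
  rw [← mul_assoc, Subring.mem_center_iff.mp hs t, mul_assoc]

set_option maxHeartbeats 1600000 in
/-- Key lemma: if every conjugate of `a` commutes with `a` up to a central factor,
then `a` is central. -/
private theorem key_central (a : D) (ha : a ≠ 0)
    (H : ∀ x : D, x ≠ 0 → ∃ z ∈ Subring.center D,
      a * (x * a * x⁻¹) = z * ((x * a * x⁻¹) * a)) :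
    a ∈ Subring.center D := by
  by_contra hac
  -- Stage 1 : find a conjugate of `a` not commuting with `a`
  have stage1 : ∃ x : D, x ≠ 0 ∧ a * (x * a * x⁻¹) ≠ (x * a * x⁻¹) * a := by
    by_contra hS
    push_neg at hS
    apply hac
    rw [Subring.mem_center_iff]
    intro d
    by_cases hd0 : d = 0
    · rw [hd0, zero_mul, mul_zero]
    by_contra hda
    have hd1 : d + 1 ≠ 0 := by
      intro h
      have hdm : d = -1 := eq_neg_of_add_eq_zero_left h
      apply hda; rw [hdm]; simp
    have h₁ := hS d hd0
    have h₂ := hS (d + 1) hd1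
    have he0 : d * a - a * d ≠ 0 := sub_ne_zero.mpr hda
    have hu : d * a * d⁻¹ - a = (d * a - a * d) * d⁻¹ := by
      rw [sub_mul, mul_inv_cancel_right₀ hd0]
    have hv : (d + 1) * a * (d + 1)⁻¹ - a = (d * a - a * d) * (d + 1)⁻¹ := by
      have h3 : d * a - a * d = (d + 1) * a - a * (d + 1) := by noncomm_ring
      rw [h3, sub_mul, mul_inv_cancel_right₀ hd1]
    have hu0 : (d * a - a * d) * d⁻¹ ≠ 0 := mul_ne_zero he0 (inv_ne_zero hd0)
    have hca_u : a * ((d * a - a * d) * d⁻¹) = ((d * a - a * d) * d⁻¹) * a := by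
      rw [← hu, mul_sub, sub_mul, h₁]
    have hca_v : a * ((d * a - a * d) * (d + 1)⁻¹) = ((d * a - a * d) * (d + 1)⁻¹) * a := by
      rw [← hv, mul_sub, sub_mul, h₂]
    have hinv_u : a * ((d * a - a * d) * d⁻¹)⁻¹ = ((d * a - a * d) * d⁻¹)⁻¹ * a :=
      pass_inv hu0 hu0 hca_u
    have hs : ((d * a - a * d) * d⁻¹)⁻¹ * ((d * a - a * d) * (d + 1)⁻¹) = d * (d + 1)⁻¹ := by
      rw [mul_inv_rev, inv_inv, mul_assoc, inv_mul_cancel_left₀ he0]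
    have hca_s : a * (d * (d + 1)⁻¹) = (d * (d + 1)⁻¹) * a := by
      rw [← hs]
      calc a * (((d * a - a * d) * d⁻¹)⁻¹ * ((d * a - a * d) * (d + 1)⁻¹))
          = (a * ((d * a - a * d) * d⁻¹)⁻¹) * ((d * a - a * d) * (d + 1)⁻¹) :=
            (mul_assoc _ _ _).symm
        _ = (((d * a - a * d) * d⁻¹)⁻¹ * a) * ((d * a - a * d) * (d + 1)⁻¹) := by rw [hinv_u]
        _ = ((d * a - a * d) * d⁻¹)⁻¹ * (a * ((d * a - a * d) * (d + 1)⁻¹)) :=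
            mul_assoc _ _ _
        _ = ((d * a - a * d) * d⁻¹)⁻¹ * (((d * a - a * d) * (d + 1)⁻¹) * a) := by rw [hca_v]
        _ = (((d * a - a * d) * d⁻¹)⁻¹ * ((d * a - a * d) * (d + 1)⁻¹)) * a :=
            (mul_assoc _ _ _).symm
    have h1s : 1 - d * (d + 1)⁻¹ = (d + 1)⁻¹ := by
      calc 1 - d * (d + 1)⁻¹ = (d + 1) * (d + 1)⁻¹ - d * (d + 1)⁻¹ := by
            rw [mul_inv_cancel₀ hd1]
        _ = (d + 1 - d) * (d + 1)⁻¹ := by rw [sub_mul]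
        _ = 1 * (d + 1)⁻¹ := by rw [add_sub_cancel_left]
        _ = (d + 1)⁻¹ := one_mul _
    have hca_dinv : a * (d + 1)⁻¹ = (d + 1)⁻¹ * a := by
      rw [← h1s, mul_sub, sub_mul, hca_s, mul_one, one_mul]
    have hca_d1 : a * (d + 1) = (d + 1) * a := by
      have h4 := pass_inv (inv_ne_zero hd1) (inv_ne_zero hd1) hca_dinv
      rwa [inv_inv] at h4
    apply hda
    rw [mul_add, add_mul, mul_one, one_mul] at hca_d1
    exact (add_right_cancel hca_d1).symm
  obtain ⟨x₀, hx0, hbne⟩ := stage1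
  obtain ⟨z, hzc, hab⟩ := H x₀ hx0
  obtain ⟨b, hbdef⟩ : ∃ t : D, t = x₀ * a * x₀⁻¹ := ⟨_, rfl⟩
  rw [← hbdef] at hbne hab
  -- hbne : a * b ≠ b * a ; hab : a * b = z * (b * a)
  have hb0 : b ≠ 0 := by
    rw [hbdef]; exact mul_ne_zero (mul_ne_zero hx0 ha) (inv_ne_zero hx0)
  have hz0 : z ≠ 0 := by
    intro h; rw [h, zero_mul] at hab; exact mul_ne_zero ha hb0 hab
  have hz1 : z ≠ 1 := by
    intro h; apply hbne; rw [hab, h, one_mul]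
  have hzc' := Subring.mem_center_iff.mp hzc
  -- P, Q, R and relation Q*Q = μ*(P*R)
  obtain ⟨P, hPdef⟩ : ∃ t : D, t = 1 + b := ⟨_, rfl⟩
  obtain ⟨Q, hQdef⟩ : ∃ t : D, t = 1 + z * b := ⟨_, rfl⟩
  obtain ⟨R, hRdef⟩ : ∃ t : D, t = 1 + z * (z * b) := ⟨_, rfl⟩
  have hPQ : a * P = Q * a := by
    rw [hPdef, hQdef, mul_add, add_mul, mul_one, one_mul, hab, mul_assoc]
  have hQR : a * Q = R * a := by
    rw [hQdef, hRdef, mul_add, add_mul, mul_one, one_mul]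
    congr 1
    calc a * (z * b) = z * (a * b) := csw hzc a b
      _ = z * (z * (b * a)) := by rw [hab]
      _ = z * (z * b) * a := by rw [mul_assoc, mul_assoc]
  have hP0 : P ≠ 0 := by
    intro h
    rw [hPdef] at h
    have hbm : b = -1 := eq_neg_of_add_eq_zero_right h
    apply hbne; rw [hbm]; simp
  have hQ0 : Q ≠ 0 := by
    intro h
    have := mul_ne_zero ha hP0
    rw [hPQ, h, zero_mul] at this
    exact this rfl
  have hR0 : R ≠ 0 := by
    intro h
    have := mul_ne_zero ha hQ0
    rw [hQR, h, zero_mul] at this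
    exact this rfl
  obtain ⟨μ, hμc, hE⟩ := H P hP0
  have hμc' := Subring.mem_center_iff.mp hμc
  have hPinv : a * P⁻¹ = Q⁻¹ * a := pass_inv hP0 hQ0 hPQ
  have hQinv : a * Q⁻¹ = R⁻¹ * a := pass_inv hQ0 hR0 hQR
  have haa0 : a * a ≠ 0 := mul_ne_zero ha ha
  have hL : a * (P * a * P⁻¹) = (Q * R⁻¹) * (a * a) := by
    calc a * (P * a * P⁻¹) = (a * P) * (a * P⁻¹) := by noncomm_ring
      _ = (Q * a) * (Q⁻¹ * a) := by rw [hPQ, hPinv]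
      _ = Q * ((a * Q⁻¹) * a) := by noncomm_ring
      _ = Q * ((R⁻¹ * a) * a) := by rw [hQinv]
      _ = (Q * R⁻¹) * (a * a) := by noncomm_ring
  have hRr : (P * a * P⁻¹) * a = (P * Q⁻¹) * (a * a) := by
    calc (P * a * P⁻¹) * a = (P * (a * P⁻¹)) * a := by noncomm_ring
      _ = (P * (Q⁻¹ * a)) * a := by rw [hPinv]
      _ = (P * Q⁻¹) * (a * a) := by noncomm_ring
  rw [hL, hRr] at hE
  have hE' : (Q * R⁻¹) * (a * a) = (μ * (P * Q⁻¹)) * (a * a) := by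
    rw [hE]; noncomm_ring
  have hQRmain : Q * R⁻¹ = μ * (P * Q⁻¹) := mul_right_cancel₀ haa0 hE'
  have hPQcomm : Q * P = P * Q := by
    have e1 : b * (z * b) = (z * b) * b := by rw [csw hzc b b, mul_assoc]
    have hd : Q * P - P * Q = (z * b) * b - b * (z * b) := by
      rw [hQdef, hPdef]; noncomm_ring
    rw [e1, sub_self] at hd
    exact sub_eq_zero.mp hd
  have hQQ : Q * Q = μ * (P * R) := by
    have h1 : Q = (μ * (P * Q⁻¹)) * R := by
      rw [← hQRmain]; exact (inv_mul_cancel_right₀ hR0 Q).symm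
    calc Q * Q = Q * ((μ * (P * Q⁻¹)) * R) := by rw [← h1]
      _ = Q * (μ * ((P * Q⁻¹) * R)) := by noncomm_ring
      _ = μ * (Q * ((P * Q⁻¹) * R)) := csw hμc Q _
      _ = μ * ((Q * P) * (Q⁻¹ * R)) := by noncomm_ring
      _ = μ * ((P * Q) * (Q⁻¹ * R)) := by rw [hPQcomm]
      _ = μ * (P * ((Q * Q⁻¹) * R)) := by noncomm_ring
      _ = μ * (P * (1 * R)) := by rw [mul_inv_cancel₀ hQ0]
      _ = μ * (P * R) := by rw [one_mul]
  -- expansion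
  have e1 : (z * b) * (z * b) = z * (z * (b * b)) := by
    rw [mul_assoc z b (z * b), csw hzc b b]
  have L1 : Q * Q = 1 + z * b + z * b + z * (z * (b * b)) := by
    have hd : Q * Q - (1 + z * b + z * b + z * (z * (b * b)))
        = (z * b) * (z * b) - z * (z * (b * b)) := by
      rw [hQdef]; noncomm_ring
    rw [e1, sub_self] at hd
    exact sub_eq_zero.mp hd
  have e2 : b * (z * (z * b)) = z * (z * (b * b)) := by
    rw [csw hzc b (z * b), csw hzc b b]
  have R1 : P * R = 1 + b + z * (z * b) + z * (z * (b * b)) := by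
    have hd : P * R - (1 + b + z * (z * b) + z * (z * (b * b)))
        = b * (z * (z * b)) - z * (z * (b * b)) := by
      rw [hPdef, hRdef]; noncomm_ring
    rw [e2, sub_self] at hd
    exact sub_eq_zero.mp hd
  have hexp : 1 + z * b + z * b + z * (z * (b * b))
      = μ * (1 + b + z * (z * b) + z * (z * (b * b))) := by
    rw [← L1, ← R1, hQQ]
  have hKey : ((1 - μ) * (z * z)) * (b * b)
      = (μ - 1) + ((μ * (z * z) + μ) - (z + z)) * b := by
    have hd : ((1 - μ) * (z * z)) * (b * b) - ((μ - 1) + ((μ * (z * z) + μ) - (z + z)) * b)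
        = (1 + z * b + z * b + z * (z * (b * b)))
          - (μ * (1 + b + z * (z * b) + z * (z * (b * b)))) := by noncomm_ring
    rw [hexp, sub_self] at hd
    exact sub_eq_zero.mp hd
  by_cases hμ1 : μ = 1
  · rw [hμ1] at hKey
    simp only [sub_self, zero_mul, one_mul, zero_add] at hKey
    rcases mul_eq_zero.mp hKey.symm with hc | hc
    · have hf : (z - 1) * (z - 1) = 0 := by
        have e : (z - 1) * (z - 1) = z * z + 1 - (z + z) := by noncomm_ring
        rw [e, hc]
      exact hz1 (by rwa [mul_self_eq_zero, sub_eq_zero] at hf)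
    · exact hb0 hc
  -- μ ≠ 1
  have hγ0 : (1 : D) - μ ≠ 0 := sub_ne_zero.mpr (Ne.symm hμ1)
  have hzz0 : z * z ≠ 0 := mul_ne_zero hz0 hz0
  have hc20 : (1 - μ) * (z * z) ≠ 0 := mul_ne_zero hγ0 hzz0
  obtain ⟨α, hαdef⟩ : ∃ t : D, t = ((1 - μ) * (z * z))⁻¹ * ((μ * (z * z) + μ) - (z + z)) :=
    ⟨_, rfl⟩
  obtain ⟨β, hβdef⟩ : ∃ t : D, t = ((1 - μ) * (z * z))⁻¹ * (μ - 1) := ⟨_, rfl⟩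
  have hbb : b * b = β + α * b := by
    calc b * b = ((1 - μ) * (z * z))⁻¹ * (((1 - μ) * (z * z)) * (b * b)) :=
          (inv_mul_cancel_left₀ hc20 _).symm
      _ = ((1 - μ) * (z * z))⁻¹ * ((μ - 1) + ((μ * (z * z) + μ) - (z + z)) * b) := by rw [hKey]
      _ = β + α * b := by rw [hβdef, hαdef, mul_add, mul_assoc]
  have hcen2 : (1 - μ) * (z * z) ∈ Subring.center D :=
    mul_mem (sub_mem (one_mem _) hμc) (mul_mem hzc hzc)
  have hαc : α ∈ Subring.center D := by
    rw [hαdef]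
    exact mul_mem (cen_inv hcen2)
      (sub_mem (add_mem (mul_mem hμc (mul_mem hzc hzc)) hμc) (add_mem hzc hzc))
  have hβc : β ∈ Subring.center D := by
    rw [hβdef]
    exact mul_mem (cen_inv hcen2) (sub_mem hμc (one_mem _))
  have hβval : β = -((z * z)⁻¹) := by
    rw [hβdef, mul_inv_rev, mul_assoc, ← neg_sub 1 μ, mul_neg, inv_mul_cancel₀ hγ0,
      mul_neg, mul_one]
  have hβ0 : β ≠ 0 := by
    rw [hβval]; exact neg_ne_zero.mpr (inv_ne_zero hzz0)
  have haa : a * (b * b) = z * (z * ((b * b) * a)) := by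
    calc a * (b * b) = (a * b) * b := (mul_assoc _ _ _).symm
      _ = (z * (b * a)) * b := by rw [hab]
      _ = z * (b * (a * b)) := by noncomm_ring
      _ = z * (b * (z * (b * a))) := by rw [hab]
      _ = z * (z * (b * (b * a))) := by rw [csw hzc b (b * a)]
      _ = z * (z * ((b * b) * a)) := by noncomm_ring
  rw [hbb] at haa
  have hF : β * a + z * (α * (b * a)) = z * (z * (β * a)) + z * (z * (α * (b * a))) := by
    calc β * a + z * (α * (b * a))
        = β * a + α * (z * (b * a)) := by rw [csw hzc α (b * a)]
      _ = β * a + α * (a * b) := by rw [hab]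
      _ = a * β + a * (α * b) := by rw [Subring.mem_center_iff.mp hβc a, csw hαc a b]
      _ = a * (β + α * b) := by rw [mul_add]
      _ = z * (z * ((β + α * b) * a)) := haa
      _ = z * (z * (β * a + α * (b * a))) := by rw [add_mul, mul_assoc]
      _ = z * (z * (β * a)) + z * (z * (α * (b * a))) := by rw [mul_add, mul_add]
  have hG : (1 - z * z) * (β * a) = (z * z - z) * (α * (b * a)) := by
    have hd : (1 - z * z) * (β * a) - (z * z - z) * (α * (b * a))
        = (β * a + z * (α * (b * a))) - (z * (z * (β * a)) + z * (z * (α * (b * a)))) := by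
      noncomm_ring
    rw [hF, sub_self] at hd
    exact sub_eq_zero.mp hd
  by_cases hα : α = 0
  · -- leads to z = -1, b*b = -1, then Stage 3
    rw [hα] at hG hbb
    simp only [zero_mul, mul_zero, add_zero] at hG hbb
    have hzz : z * z = 1 := by
      rcases mul_eq_zero.mp hG with h | h
      · exact (sub_eq_zero.mp h).symm
      · exact absurd h (mul_ne_zero hβ0 ha)
    have hzm : z = -1 := by
      have h2 : (z - 1) * (z + 1) = 0 := by
        have e : (z - 1) * (z + 1) = z * z - 1 := by noncomm_ring
        rw [e, hzz, sub_self]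
      rcases mul_eq_zero.mp h2 with h | h
      · exact absurd (sub_eq_zero.mp h) hz1
      · exact eq_neg_of_add_eq_zero_left h
    have hbbm : b * b = -1 := by rw [hbb, hβval, hzz, inv_one]
    rw [hzm, neg_one_mul] at hab
    -- hab : a * b = -(b * a)
    have hba2 : b * a = -(a * b) := by rw [hab, neg_neg]
    have haam : a * a = -1 := by
      have hbb2 : b * b = x₀ * (a * a) * x₀⁻¹ := by
        rw [hbdef]
        calc (x₀ * a * x₀⁻¹) * (x₀ * a * x₀⁻¹)
            = (x₀ * a) * ((x₀⁻¹ * (x₀ * a)) * x₀⁻¹) := by noncomm_ring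
          _ = (x₀ * a) * ((a) * x₀⁻¹) := by rw [inv_mul_cancel_left₀ hx0]
          _ = x₀ * (a * a) * x₀⁻¹ := by noncomm_ring
      have hX : x₀ * (a * a) * x₀⁻¹ = -1 := by rw [← hbb2, hbbm]
      calc a * a = x₀⁻¹ * (x₀ * (a * a)) := (inv_mul_cancel_left₀ hx0 _).symm
        _ = x₀⁻¹ * ((x₀ * (a * a) * x₀⁻¹) * x₀) := by rw [inv_mul_cancel_right₀ hx0]
        _ = x₀⁻¹ * ((-1) * x₀) := by rw [hX]
        _ = -1 := by rw [neg_one_mul, mul_neg, inv_mul_cancel₀ hx0]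
    have h2ne : (2 : D) ≠ 0 := by
      intro h2
      apply hz1
      rw [hzm]
      have h11 : (1 : D) + 1 = 0 := by rw [one_add_one_eq_two]; exact h2
      exact neg_eq_of_add_eq_zero_left h11
    -- Stage 3
    have hat : a * (1 + a) = (1 + a) * a := by noncomm_ring
    have ht0 : (1 : D) + a ≠ 0 := by
      intro h
      have hA : a = -1 := eq_neg_of_add_eq_zero_right h
      apply hbne; rw [hA]; simp
    obtain ⟨w, hwdef⟩ : ∃ t : D, t = (1 + a) * b := ⟨_, rfl⟩
    have hw0 : w ≠ 0 := by rw [hwdef]; exact mul_ne_zero ht0 hb0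
    have haw : a * w = -(w * a) := by
      rw [hwdef]
      calc a * ((1 + a) * b) = (1 + a) * (a * b) := by rw [← mul_assoc, hat, mul_assoc]
        _ = (1 + a) * (-(b * a)) := by rw [hab]
        _ = -((1 + a) * (b * a)) := by rw [mul_neg]
        _ = -(((1 + a) * b) * a) := by rw [mul_assoc]
    obtain ⟨p, hpdef⟩ : ∃ t : D, t = 1 + w := ⟨_, rfl⟩
    obtain ⟨q, hqdef⟩ : ∃ t : D, t = 1 - w := ⟨_, rfl⟩
    have hap : a * p = q * a := by
      rw [hpdef, hqdef, mul_add, mul_one, haw, sub_mul, one_mul, ← sub_eq_add_neg]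
    have haq : a * q = p * a := by
      rw [hpdef, hqdef, mul_sub, mul_one, haw, add_mul, one_mul, sub_neg_eq_add]
    have hp0 : p ≠ 0 := by
      intro h
      rw [hpdef] at h
      have h' : w = -1 := eq_neg_of_add_eq_zero_right h
      rw [hwdef] at h'
      have hbv : b = (1 + a)⁻¹ * (-1) := by
        calc b = (1 + a)⁻¹ * ((1 + a) * b) := (inv_mul_cancel_left₀ ht0 _).symm
          _ = (1 + a)⁻¹ * (-1) := by rw [h']
      apply hbne
      have hainv : a * (1 + a)⁻¹ = (1 + a)⁻¹ * a := pass_inv ht0 ht0 hat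
      rw [hbv]
      calc a * ((1 + a)⁻¹ * (-1)) = (a * (1 + a)⁻¹) * (-1) := (mul_assoc _ _ _).symm
        _ = ((1 + a)⁻¹ * a) * (-1) := by rw [hainv]
        _ = ((1 + a)⁻¹ * (-1)) * a := by noncomm_ring
    have hq0 : q ≠ 0 := by
      intro h
      rw [hqdef] at h
      have h' : (1 : D) = w := sub_eq_zero.mp h
      rw [hwdef] at h'
      have hbv : b = (1 + a)⁻¹ := by
        calc b = (1 + a)⁻¹ * ((1 + a) * b) := (inv_mul_cancel_left₀ ht0 _).symm
          _ = (1 + a)⁻¹ * 1 := by rw [← h']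
          _ = (1 + a)⁻¹ := mul_one _
      apply hbne
      rw [hbv]
      exact pass_inv ht0 ht0 hat
    obtain ⟨ν, Hνc, hE3⟩ := H p hp0
    have hpinv : a * p⁻¹ = q⁻¹ * a := pass_inv hp0 hq0 hap
    have hqinv : a * q⁻¹ = p⁻¹ * a := pass_inv hq0 hp0 haq
    have hL3 : a * (p * a * p⁻¹) = (q * p⁻¹) * (a * a) := by
      calc a * (p * a * p⁻¹) = (a * p) * (a * p⁻¹) := by noncomm_ring
        _ = (q * a) * (q⁻¹ * a) := by rw [hap, hpinv]
        _ = q * ((a * q⁻¹) * a) := by noncomm_ring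
        _ = q * ((p⁻¹ * a) * a) := by rw [hqinv]
        _ = (q * p⁻¹) * (a * a) := by noncomm_ring
    have hR3 : (p * a * p⁻¹) * a = (p * q⁻¹) * (a * a) := by
      calc (p * a * p⁻¹) * a = (p * (a * p⁻¹)) * a := by noncomm_ring
        _ = (p * (q⁻¹ * a)) * a := by rw [hpinv]
        _ = (p * q⁻¹) * (a * a) := by noncomm_ring
    rw [hL3, hR3] at hE3
    have hE3' : (q * p⁻¹) * (a * a) = (ν * (p * q⁻¹)) * (a * a) := by
      rw [hE3]; noncomm_ring
    have hmain3 : q * p⁻¹ = ν * (p * q⁻¹) := mul_right_cancel₀ haa0 hE3'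
    have hpqcomm : q * p = p * q := by rw [hpdef, hqdef]; noncomm_ring
    have hqq : q * q = ν * (p * p) := by
      have h1 : q = (ν * (p * q⁻¹)) * p := by
        rw [← hmain3]; exact (inv_mul_cancel_right₀ hp0 q).symm
      calc q * q = q * ((ν * (p * q⁻¹)) * p) := by rw [← h1]
        _ = q * (ν * ((p * q⁻¹) * p)) := by noncomm_ring
        _ = ν * (q * ((p * q⁻¹) * p)) := csw Hνc q _
        _ = ν * ((q * p) * (q⁻¹ * p)) := by noncomm_ring
        _ = ν * ((p * q) * (q⁻¹ * p)) := by rw [hpqcomm]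
        _ = ν * (p * ((q * q⁻¹) * p)) := by noncomm_ring
        _ = ν * (p * (1 * p)) := by rw [mul_inv_cancel₀ hq0]
        _ = ν * (p * p) := by rw [one_mul]
    have haqq : a * (q * q) = (p * p) * a := by
      calc a * (q * q) = (a * q) * q := (mul_assoc _ _ _).symm
        _ = (p * a) * q := by rw [haq]
        _ = p * (a * q) := mul_assoc _ _ _
        _ = p * (p * a) := by rw [haq]
        _ = (p * p) * a := (mul_assoc _ _ _).symm
    have happ : a * (p * p) = (q * q) * a := by
      calc a * (p * p) = (a * p) * p := (mul_assoc _ _ _).symm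
        _ = (q * a) * p := by rw [hap]
        _ = q * (a * p) := mul_assoc _ _ _
        _ = q * (q * a) := by rw [hap]
        _ = (q * q) * a := (mul_assoc _ _ _).symm
    have hpp : p * p = ν * (q * q) := by
      have h2 : a * (q * q) = a * (ν * (p * p)) := by rw [hqq]
      rw [haqq] at h2
      have h3 : a * (ν * (p * p)) = (ν * (q * q)) * a := by
        calc a * (ν * (p * p)) = ν * (a * (p * p)) := csw Hνc a _
          _ = ν * ((q * q) * a) := by rw [happ]
          _ = (ν * (q * q)) * a := (mul_assoc _ _ _).symm
      rw [h3] at h2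
      exact mul_right_cancel₀ ha h2
    have hqq0 : q * q ≠ 0 := mul_ne_zero hq0 hq0
    have hνν : (1 - ν * ν) * (q * q) = 0 := by
      have hiter : q * q = ν * (ν * (q * q)) := by
        calc q * q = ν * (p * p) := hqq
          _ = ν * (ν * (q * q)) := by rw [hpp]
      have hd : (1 - ν * ν) * (q * q) = q * q - ν * (ν * (q * q)) := by noncomm_ring
      rw [hd, ← hiter, sub_self]
    have hν2 : ν = 1 ∨ ν = -1 := by
      rcases mul_eq_zero.mp hνν with h | h
      · have h' : (1 - ν) * (1 + ν) = 0 := by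
          have e : (1 - ν) * (1 + ν) = 1 - ν * ν := by noncomm_ring
          rw [e]; exact h
        rcases mul_eq_zero.mp h' with h'' | h''
        · left; exact (sub_eq_zero.mp h'').symm
        · right; exact eq_neg_of_add_eq_zero_right h''
      · exact absurd h hqq0
    rcases hν2 with hν1 | hνm
    · rw [hν1, one_mul] at hqq
      have h4 : (2 : D) * ((2 : D) * w) = 0 := by
        have hd : (2 : D) * ((2 : D) * w) = p * p - q * q := by
          rw [hpdef, hqdef]; noncomm_ring
        rw [hd, ← hqq, sub_self]
      rcases mul_eq_zero.mp h4 with h | h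
      · exact h2ne h
      rcases mul_eq_zero.mp h with h | h
      · exact h2ne h
      · exact hw0 h
    · rw [hνm] at hqq
      have hww : w * w = -1 := by
        have hd : (2 : D) * (1 + w * w) = p * p + q * q := by
          rw [hpdef, hqdef]; noncomm_ring
        have h0 : (2 : D) * (1 + w * w) = 0 := by
          rw [hd, hqq]; noncomm_ring
        have h1 : 1 + w * w = 0 := by
          rcases mul_eq_zero.mp h0 with h | h
          · exact absurd h h2ne
          · exact h
        exact eq_neg_of_add_eq_zero_right h1
      have hbt : b * (1 + a) = (1 - a) * b := by
        rw [mul_add, mul_one, hba2, sub_mul, one_mul, ← sub_eq_add_neg]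
      have hcomp : w * w = -(2 : D) := by
        rw [hwdef]
        calc ((1 + a) * b) * ((1 + a) * b) = (1 + a) * ((b * (1 + a)) * b) := by noncomm_ring
          _ = (1 + a) * (((1 - a) * b) * b) := by rw [hbt]
          _ = ((1 + a) * (1 - a)) * (b * b) := by noncomm_ring
          _ = ((1 + a) * (1 - a)) * (-1) := by rw [hbbm]
          _ = -((1 + a) * (1 - a)) := by rw [mul_neg_one]
          _ = -(1 - a * a) := by noncomm_ring
          _ = -(1 - (-1)) := by rw [haam]
          _ = -(2 : D) := by norm_num
      rw [hww] at hcomp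
      have h12 : (1 : D) = 2 := neg_inj.mp hcomp
      rw [show (2 : D) = 1 + 1 from by norm_num] at h12
      exact one_ne_zero ((left_eq_add.mp h12))
  · -- α ≠ 0 : b is central, contradiction
    have hzzz0 : z * z - z ≠ 0 := by
      have e : z * z - z = z * (z - 1) := by noncomm_ring
      rw [e]
      exact mul_ne_zero hz0 (sub_ne_zero.mpr hz1)
    have hδ0 : (z * z - z) * α ≠ 0 := mul_ne_zero hzzz0 hα
    have hG2 : ((z * z - z) * α) * (b * a) = ((1 - z * z) * β) * a := by
      calc ((z * z - z) * α) * (b * a) = (z * z - z) * (α * (b * a)) := mul_assoc _ _ _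
        _ = (1 - z * z) * (β * a) := hG.symm
        _ = ((1 - z * z) * β) * a := (mul_assoc _ _ _).symm
    have hba : b * a = (((z * z - z) * α)⁻¹ * ((1 - z * z) * β)) * a := by
      calc b * a = ((z * z - z) * α)⁻¹ * (((z * z - z) * α) * (b * a)) :=
            (inv_mul_cancel_left₀ hδ0 _).symm
        _ = ((z * z - z) * α)⁻¹ * (((1 - z * z) * β) * a) := by rw [hG2]
        _ = (((z * z - z) * α)⁻¹ * ((1 - z * z) * β)) * a := (mul_assoc _ _ _).symm
    have hbval : b = ((z * z - z) * α)⁻¹ * ((1 - z * z) * β) := mul_right_cancel₀ ha hba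
    have hbc : b ∈ Subring.center D := by
      rw [hbval]
      exact mul_mem (cen_inv (mul_mem (sub_mem (mul_mem hzc hzc) hzc) hαc))
        (mul_mem (sub_mem (one_mem _) (mul_mem hzc hzc)) hβc)
    exact hbne (Subring.mem_center_iff.mp hbc a)


end Helpers

/-- A nilpotent normal subgroup of the multiplicative group of a division ring
is contained in the center. -/
theorem nilpotent_normal_subgroup_central (D : Type*) [DivisionRing D]
    (G : Subgroup Dˣ) (hn : G.Normal) (hnil : Group.IsNilpotent G) :
    ∀ g ∈ G, (g : D) ∈ Subring.center D := by
  obtain ⟨n, htop⟩ := hnil.nilpotent'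
  have main : ∀ m : ℕ, ∀ k : G, k ∈ Subgroup.upperCentralSeries G m →
      ((k : Dˣ) : D) ∈ Subring.center D := by
    intro m
    induction m with
    | zero =>
      intro k hk
      rw [upperCentralSeries_zero, Subgroup.mem_bot] at hk
      rw [hk]
      simpa using Subring.one_mem (Subring.center D)
    | succ m ih =>
      intro k hk
      apply key_central ((k : Dˣ) : D) (Units.ne_zero _)
      intro x hx
      have hconj : (Units.mk0 x hx) * (k : Dˣ) * (Units.mk0 x hx)⁻¹ ∈ G :=
        hn.conj_mem _ k.2 _
      set c : G := ⟨(Units.mk0 x hx) * (k : Dˣ) * (Units.mk0 x hx)⁻¹, hconj⟩ with hcdef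
      have hcomm : k * c * k⁻¹ * c⁻¹ ∈ upperCentralSeries G m :=
        (mem_upperCentralSeries_succ_iff.mp hk) c
      have hzc := ih _ hcomm
      refine ⟨_, hzc, ?_⟩
      have hx' : x * ((k : Dˣ) : D) * x⁻¹ = (((c : G) : Dˣ) : D) := by
        rw [hcdef]
        simp [Units.val_mul]
      rw [hx']
      have hU : ((k : Dˣ)) * (c : Dˣ) =
          (((k * c * k⁻¹ * c⁻¹ : G) : Dˣ)) * ((c : Dˣ) * (k : Dˣ)) := by
        push_cast
        group
      have := congrArg (Units.val) hU
      simpa only [Units.val_mul] using this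
  intro g hg
  exact main n ⟨g, hg⟩ (by rw [htop]; exact Subgroup.mem_top _)
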